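/- For all bounded measurable ψ₁, ψ₂ : [0,T] → ℝ and all t ∈ [0,T], |Λ(ψ₁)(t) − Λ(ψ₂)(t)| ≤ C₁ · sup_{ξ ∈ [0,T]} |ψ₁(ξ) − ψ₂(ξ)|, where C₁ = a₀ C_λ α_Aγ_A T + (2/k_A) a₀² r_A C_λ² α_Aγ_A T². In particular the map ψ ↦ Λ(ψ) is Lipschitz continuous with respect to the supremum norm, with a Lipschitz constant depending only on r_A, k_A, α_A, γ_A, C_λ, T and a₀. -/

import Mathlib

open MeasureTheory Set intervalIntegral

/-- The explicit solution operator `Λ` for the tumor-cell equation (Bernoulli's method). -/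
noncomputable def Lam (rA kA αA γA lam a₀ : ℝ) (ψ : ℝ → ℝ) (t : ℝ) : ℝ :=
  (a₀ * kA * Real.exp (lam * t) * Real.exp (-(αA * γA) * ∫ ξ in (0:ℝ)..t, |ψ ξ|)) /
    (kA + a₀ * rA *
      ∫ s in (0:ℝ)..t, Real.exp (lam * s) * Real.exp (-(αA * γA) * ∫ ξ in (0:ℝ)..s, |ψ ξ|))

private lemma exp_lip {x y : ℝ} (hx : x ≤ 0) (hy : y ≤ 0) :
    |Real.exp x - Real.exp y| ≤ |x - y| := by
  wlog h : y ≤ x generalizing x y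
  · rw [abs_sub_comm, abs_sub_comm x y]; exact this hy hx (le_of_not_ge h)
  rw [abs_of_nonneg (sub_nonneg.2 (Real.exp_le_exp.2 h)), abs_of_nonneg (sub_nonneg.2 h)]
  have h1 : Real.exp x ≤ 1 := Real.exp_le_one_iff.2 hx
  have h2 : Real.exp y = Real.exp x * Real.exp (y - x) := by
    rw [← Real.exp_add]; ring_nf
  have h3 := Real.add_one_le_exp (y - x)
  nlinarith [Real.exp_pos x, Real.exp_pos y]

private lemma aux_bounds (T lam g : ℝ) (hT : 0 < T)
    (ψ : ℝ → ℝ) (hm : Measurable ψ) (M : ℝ) (hb : ∀ s ∈ Icc (0:ℝ) T, |ψ s| ≤ M) :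
    (∀ s ∈ Icc (0:ℝ) T, IntervalIntegrable (fun ξ => |ψ ξ|) volume 0 s) ∧
    (∀ s ∈ Icc (0:ℝ) T, 0 ≤ ∫ ξ in (0:ℝ)..s, |ψ ξ|) ∧
    (∀ t ∈ Icc (0:ℝ) T, IntervalIntegrable
      (fun s => Real.exp (lam * s) * Real.exp (-g * ∫ ξ in (0:ℝ)..s, |ψ ξ|)) volume 0 t) := by
  have hInt : IntegrableOn (fun ξ => |ψ ξ|) (Icc (0:ℝ) T) volume := by
    apply Measure.integrableOn_of_bounded (M := M) measure_Icc_lt_top.ne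
      (hm.abs.aestronglyMeasurable)
    exact (ae_restrict_iff' measurableSet_Icc).2 (ae_of_all _ fun a ha => by
      simpa [Real.norm_eq_abs, abs_abs] using hb a ha)
  have hii : ∀ s ∈ Icc (0:ℝ) T, IntervalIntegrable (fun ξ => |ψ ξ|) volume 0 s := by
    intro s hs
    exact (hInt.mono_set (by rw [uIcc_of_le hs.1]; exact Icc_subset_Icc le_rfl hs.2)).intervalIntegrable
  refine ⟨hii, fun s hs => intervalIntegral.integral_nonneg hs.1 (fun u _ => abs_nonneg _), ?_⟩
  have hcontI : ContinuousOn (fun s => ∫ ξ in (0:ℝ)..s, |ψ ξ|) (Icc (0:ℝ) T) := by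
    have h := continuousOn_primitive_interval (a := (0:ℝ)) (b := T) (μ := volume)
      (f := fun ξ => |ψ ξ|) (by rwa [uIcc_of_le hT.le])
    rwa [uIcc_of_le hT.le] at h
  have hcontE : ContinuousOn
      (fun s => Real.exp (lam * s) * Real.exp (-g * ∫ ξ in (0:ℝ)..s, |ψ ξ|)) (Icc (0:ℝ) T) := by
    apply ContinuousOn.mul
    · exact (Real.continuous_exp.comp (continuous_const.mul continuous_id)).continuousOn
    · exact Real.continuous_exp.comp_continuousOn (continuousOn_const.mul hcontI)
  intro t ht
  exact (hcontE.mono (by rw [uIcc_of_le ht.1]; exact Icc_subset_Icc le_rfl ht.2)).intervalIntegrable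

set_option maxHeartbeats 1000000 in
/-- **Lemma 5(iii) of the paper.** `Λ` is Lipschitz in the sup norm on `[0,T]`, with
Lipschitz constant `C₁ = a₀ C_λ α_Aγ_A T + (2/k_A) a₀² r_A C_λ² α_Aγ_A T²`. -/
theorem Lam_lipschitz
    (T rA kA μA εA αA γA a₀ : ℝ)
    (hT : 0 < T) (hrA : 0 < rA) (hkA : 0 < kA)
    (hμA : 0 ≤ μA) (hεA : 0 ≤ εA) (hαA : 0 ≤ αA) (hγA : 0 ≤ γA) (ha₀ : 0 ≤ a₀)
    (ψ₁ ψ₂ : ℝ → ℝ) (hmeas₁ : Measurable ψ₁) (hmeas₂ : Measurable ψ₂)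
    (hbdd₁ : ∃ M : ℝ, ∀ t ∈ Icc (0 : ℝ) T, |ψ₁ t| ≤ M)
    (hbdd₂ : ∃ M : ℝ, ∀ t ∈ Icc (0 : ℝ) T, |ψ₂ t| ≤ M) :
    ∀ t ∈ Icc (0 : ℝ) T,
      |Lam rA kA αA γA (rA - (μA + εA)) a₀ ψ₁ t -
        Lam rA kA αA γA (rA - (μA + εA)) a₀ ψ₂ t| ≤
      (a₀ * max 1 (Real.exp ((rA - (μA + εA)) * T)) * (αA * γA) * T +
          (2 / kA) * a₀ ^ 2 * rA * (max 1 (Real.exp ((rA - (μA + εA)) * T))) ^ 2 *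
            (αA * γA) * T ^ 2) *
        ⨆ ξ ∈ Icc (0 : ℝ) T, |ψ₁ ξ - ψ₂ ξ| := by
  obtain ⟨M₁, hM₁⟩ := hbdd₁
  obtain ⟨M₂, hM₂⟩ := hbdd₂
  set lam := rA - (μA + εA) with hlamdef
  set g := αA * γA with hgdef
  have hg0 : 0 ≤ g := mul_nonneg hαA hγA
  set Cl := max 1 (Real.exp (lam * T)) with hCldef
  have hCl1 : (1:ℝ) ≤ Cl := le_max_left _ _
  have hCl0 : (0:ℝ) < Cl := lt_of_lt_of_le one_pos hCl1
  set S := ⨆ ξ ∈ Icc (0 : ℝ) T, |ψ₁ ξ - ψ₂ ξ| with hSdef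
  have hSbdd : BddAbove ((fun ξ => |ψ₁ ξ - ψ₂ ξ|) '' Icc (0:ℝ) T) := by
    refine ⟨M₁ + M₂, ?_⟩
    rintro x ⟨ξ, hξ, rfl⟩
    exact le_trans (abs_sub _ _) (add_le_add (hM₁ ξ hξ) (hM₂ ξ hξ))
  have hbd : BddAbove (range fun ξ => ⨆ _ : ξ ∈ Icc (0:ℝ) T, |ψ₁ ξ - ψ₂ ξ|) := by
    refine ⟨max 0 (M₁ + M₂), ?_⟩
    rintro x ⟨y, rfl⟩
    dsimp only
    by_cases hy : y ∈ Icc (0:ℝ) T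
    · rw [ciSup_pos hy]
      exact le_trans (le_trans (abs_sub _ _) (add_le_add (hM₁ y hy) (hM₂ y hy)))
        (le_max_right _ _)
    · haveI : IsEmpty (y ∈ Icc (0:ℝ) T) := ⟨hy⟩
      rw [Real.iSup_of_isEmpty]
      exact le_max_left _ _
  have hSle : ∀ ξ ∈ Icc (0:ℝ) T, |ψ₁ ξ - ψ₂ ξ| ≤ S := by
    intro ξ hξ
    have h := le_ciSup hbd ξ
    rwa [ciSup_pos hξ] at h
  have hS0 : (0:ℝ) ≤ S := le_trans (abs_nonneg _) (hSle 0 ⟨le_refl 0, hT.le⟩)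
  obtain ⟨hii₁, hInn₁, hEint₁⟩ := aux_bounds T lam g hT ψ₁ hmeas₁ M₁ hM₁
  obtain ⟨hii₂, hInn₂, hEint₂⟩ := aux_bounds T lam g hT ψ₂ hmeas₂ M₂ hM₂
  have hexpCl : ∀ s ∈ Icc (0:ℝ) T, Real.exp (lam * s) ≤ Cl := by
    intro s hs
    rcases le_or_gt lam 0 with h | h
    · exact le_trans (Real.exp_le_one_iff.2 (by nlinarith [hs.1])) hCl1
    · exact le_trans (Real.exp_le_exp.2 (by nlinarith [hs.2])) (le_max_right _ _)
  -- Lipschitz bound on the inner integral difference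
  have hIdiff : ∀ s ∈ Icc (0:ℝ) T,
      abs ((∫ ξ in (0:ℝ)..s, |ψ₁ ξ|) - ∫ ξ in (0:ℝ)..s, |ψ₂ ξ|) ≤ T * S := by
    intro s hs
    rw [← intervalIntegral.integral_sub (hii₁ s hs) (hii₂ s hs)]
    have hb : ∀ x ∈ Set.uIoc (0:ℝ) s, ‖|ψ₁ x| - |ψ₂ x|‖ ≤ S := by
      intro x hx
      rw [uIoc_of_le hs.1] at hx
      rw [Real.norm_eq_abs]
      exact le_trans (abs_abs_sub_abs_le_abs_sub _ _)
        (hSle x ⟨hx.1.le, hx.2.trans hs.2⟩)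
    have h := intervalIntegral.norm_integral_le_of_norm_le_const hb
    rw [Real.norm_eq_abs] at h
    refine h.trans ?_
    rw [sub_zero, abs_of_nonneg hs.1]
    nlinarith [hs.1, hs.2]
  -- Lipschitz bound on the exponentials
  have hexpdiff : ∀ s ∈ Icc (0:ℝ) T,
      |Real.exp (-g * ∫ ξ in (0:ℝ)..s, |ψ₁ ξ|) - Real.exp (-g * ∫ ξ in (0:ℝ)..s, |ψ₂ ξ|)|
        ≤ g * (T * S) := by
    intro s hs
    have h1 : -g * (∫ ξ in (0:ℝ)..s, |ψ₁ ξ|) ≤ 0 := by nlinarith [hInn₁ s hs]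
    have h2 : -g * (∫ ξ in (0:ℝ)..s, |ψ₂ ξ|) ≤ 0 := by nlinarith [hInn₂ s hs]
    refine (exp_lip h1 h2).trans ?_
    have he : -g * (∫ ξ in (0:ℝ)..s, |ψ₁ ξ|) - -g * (∫ ξ in (0:ℝ)..s, |ψ₂ ξ|)
        = -(g * ((∫ ξ in (0:ℝ)..s, |ψ₁ ξ|) - ∫ ξ in (0:ℝ)..s, |ψ₂ ξ|)) := by ring
    rw [he, abs_neg, abs_mul, abs_of_nonneg hg0]
    exact mul_le_mul_of_nonneg_left (hIdiff s hs) hg0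
  -- Bound on the integrand E of the denominator
  have hEdiff : ∀ s ∈ Icc (0:ℝ) T,
      |Real.exp (lam * s) * Real.exp (-g * ∫ ξ in (0:ℝ)..s, |ψ₁ ξ|) -
        Real.exp (lam * s) * Real.exp (-g * ∫ ξ in (0:ℝ)..s, |ψ₂ ξ|)| ≤ Cl * (g * (T * S)) := by
    intro s hs
    rw [← mul_sub, abs_mul, abs_of_pos (Real.exp_pos _)]
    exact mul_le_mul (hexpCl s hs) (hexpdiff s hs) (abs_nonneg _) hCl0.le
  intro t ht
  simp only [Lam]
  set N₁ := a₀ * kA * Real.exp (lam * t) * Real.exp (-g * ∫ ξ in (0:ℝ)..t, |ψ₁ ξ|) with hN₁def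
  set N₂ := a₀ * kA * Real.exp (lam * t) * Real.exp (-g * ∫ ξ in (0:ℝ)..t, |ψ₂ ξ|) with hN₂def
  set J₁ := ∫ s in (0:ℝ)..t, Real.exp (lam * s) * Real.exp (-g * ∫ ξ in (0:ℝ)..s, |ψ₁ ξ|)
    with hJ₁def
  set J₂ := ∫ s in (0:ℝ)..t, Real.exp (lam * s) * Real.exp (-g * ∫ ξ in (0:ℝ)..s, |ψ₂ ξ|)
    with hJ₂def
  set D₁ := kA + a₀ * rA * J₁ with hD₁def
  set D₂ := kA + a₀ * rA * J₂ with hD₂def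
  have hJ₁0 : 0 ≤ J₁ := intervalIntegral.integral_nonneg ht.1 (fun u _ => by positivity)
  have hJ₂0 : 0 ≤ J₂ := intervalIntegral.integral_nonneg ht.1 (fun u _ => by positivity)
  have hD₁k : kA ≤ D₁ := le_add_of_nonneg_right (by positivity)
  have hD₂k : kA ≤ D₂ := le_add_of_nonneg_right (by positivity)
  have hD₁0 : 0 < D₁ := lt_of_lt_of_le hkA hD₁k
  have hD₂0 : 0 < D₂ := lt_of_lt_of_le hkA hD₂k
  -- numerator difference bound
  have hNdiff : |N₁ - N₂| ≤ a₀ * kA * Cl * (g * (T * S)) := by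
    have he : N₁ - N₂ = a₀ * kA * Real.exp (lam * t) *
        (Real.exp (-g * ∫ ξ in (0:ℝ)..t, |ψ₁ ξ|) -
          Real.exp (-g * ∫ ξ in (0:ℝ)..t, |ψ₂ ξ|)) := by
      rw [hN₁def, hN₂def]; ring
    rw [he, abs_mul, abs_of_nonneg (by positivity : (0:ℝ) ≤ a₀ * kA * Real.exp (lam * t))]
    have h1 : a₀ * kA * Real.exp (lam * t) ≤ a₀ * kA * Cl :=
      mul_le_mul_of_nonneg_left (hexpCl t ht) (by positivity)
    exact mul_le_mul h1 (hexpdiff t ht) (abs_nonneg _) (by positivity)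
  have hN₂le : |N₂| ≤ a₀ * kA * Cl := by
    rw [hN₂def, abs_of_nonneg (by positivity)]
    have h1 : Real.exp (-g * ∫ ξ in (0:ℝ)..t, |ψ₂ ξ|) ≤ 1 :=
      Real.exp_le_one_iff.2 (by nlinarith [hInn₂ t ht])
    calc a₀ * kA * Real.exp (lam * t) * Real.exp (-g * ∫ ξ in (0:ℝ)..t, |ψ₂ ξ|)
        ≤ a₀ * kA * Real.exp (lam * t) * 1 :=
          mul_le_mul_of_nonneg_left h1 (by positivity)
      _ = a₀ * kA * Real.exp (lam * t) := by ring
      _ ≤ a₀ * kA * Cl := mul_le_mul_of_nonneg_left (hexpCl t ht) (by positivity)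
  -- denominator difference bound
  have hDdiff : |D₂ - D₁| ≤ a₀ * rA * (Cl * (g * (T * S)) * T) := by
    have he : D₂ - D₁ = a₀ * rA * (J₂ - J₁) := by rw [hD₁def, hD₂def]; ring
    rw [he, abs_mul, abs_of_nonneg (by positivity : (0:ℝ) ≤ a₀ * rA)]
    rw [hJ₁def, hJ₂def, ← intervalIntegral.integral_sub (hEint₂ t ht) (hEint₁ t ht)]
    have hb : ∀ x ∈ Set.uIoc (0:ℝ) t, ‖Real.exp (lam * x) * Real.exp (-g * ∫ ξ in (0:ℝ)..x, |ψ₂ ξ|) -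
        Real.exp (lam * x) * Real.exp (-g * ∫ ξ in (0:ℝ)..x, |ψ₁ ξ|)‖ ≤ Cl * (g * (T * S)) := by
      intro x hx
      rw [uIoc_of_le ht.1] at hx
      rw [Real.norm_eq_abs, abs_sub_comm]
      exact hEdiff x ⟨hx.1.le, hx.2.trans ht.2⟩
    have h := intervalIntegral.norm_integral_le_of_norm_le_const hb
    rw [Real.norm_eq_abs, sub_zero, abs_of_nonneg ht.1] at h
    have h2 : Cl * (g * (T * S)) * t ≤ Cl * (g * (T * S)) * T :=
      mul_le_mul_of_nonneg_left ht.2 (by positivity)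
    exact mul_le_mul_of_nonneg_left (a := a₀ * rA) (h.trans h2) (by positivity)
  -- put things together
  have key : N₁ / D₁ - N₂ / D₂ = (N₁ - N₂) / D₁ + N₂ * (D₂ - D₁) / (D₁ * D₂) := by
    field_simp
    ring
  have hkk : kA * kA ≤ D₁ * D₂ := mul_le_mul hD₁k hD₂k hkA.le hD₁0.le
  calc |N₁ / D₁ - N₂ / D₂| ≤ |N₁ - N₂| / D₁ + |N₂| * |D₂ - D₁| / (D₁ * D₂) := by
        rw [key]
        refine (abs_add_le _ _).trans ?_
        rw [abs_div, abs_div, abs_mul, abs_of_pos hD₁0, abs_of_pos (mul_pos hD₁0 hD₂0)]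
    _ ≤ (a₀ * kA * Cl * (g * (T * S))) / kA +
          (a₀ * kA * Cl) * (a₀ * rA * (Cl * (g * (T * S)) * T)) / (kA * kA) := by
        refine add_le_add (div_le_div₀ (le_trans (abs_nonneg _) hNdiff) hNdiff hkA hD₁k) ?_
        have hmul : |N₂| * |D₂ - D₁| ≤ (a₀ * kA * Cl) * (a₀ * rA * (Cl * (g * (T * S)) * T)) :=
          mul_le_mul hN₂le hDdiff (abs_nonneg _) (by positivity)
        exact div_le_div₀ (le_trans (by positivity) hmul) hmul (by positivity) hkk
    _ = a₀ * Cl * g * T * S + (1 / kA) * (a₀ ^ 2 * rA * Cl ^ 2 * g * T ^ 2 * S) := by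
        field_simp
    _ ≤ a₀ * Cl * g * T * S + (2 / kA) * (a₀ ^ 2 * rA * Cl ^ 2 * g * T ^ 2 * S) := by
        have hx : 0 ≤ a₀ ^ 2 * rA * Cl ^ 2 * g * T ^ 2 * S :=
          mul_nonneg (mul_nonneg (mul_nonneg (mul_nonneg (mul_nonneg (sq_nonneg a₀) hrA.le)
            (sq_nonneg Cl)) hg0) (sq_nonneg T)) hS0
        have h12 : (1:ℝ) / kA ≤ 2 / kA := (div_le_div_iff_of_pos_right hkA).2 one_le_two
        linarith [mul_le_mul_of_nonneg_right h12 hx]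
    _ = (a₀ * Cl * g * T + (2 / kA) * a₀ ^ 2 * rA * Cl ^ 2 * g * T ^ 2) * S := by ring
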